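/- Let R be a Dedekind domain and let I and I' be nonzero ideals of R. Then there exists a faithfully flat étale R-algebra S such that the S-modules S ⊗_R (R ⊕ I) and S ⊗_R (R ⊕ I') are isomorphic. -/

import Mathlib

open scoped TensorProduct nonZeroDivisors
open DirectSum

universe u


open scoped TensorProduct



section ModuleHelper

variable {R : Type*} (S : Type*) [CommRing R] [CommRing S] [Algebra R S] [Module.Flat R S]

/-- The `S`-linear upgrade of `TensorProduct.prodRight` for base change. -/
noncomputable def prodBaseChange (M N : Type*) [AddCommGroup M] [AddCommGroup N]
    [Module R M] [Module R N] :
    (S ⊗[R] (M × N)) ≃ₗ[S] (S ⊗[R] M) × (S ⊗[R] N) :=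
  TensorProduct.prodRight R S S M N

variable {I : Ideal R}

/-- The canonical `S`-linear map `S ⊗[R] I → S`. -/
noncomputable def tensorIdealToRing (I : Ideal R) : (S ⊗[R] ↥I) →ₗ[S] S :=
  (TensorProduct.AlgebraTensorModule.rid R S S).toLinearMap ∘ₗ (I.subtype.baseChange S)

lemma tensorIdealToRing_tmul (s : S) (x : ↥I) :
    tensorIdealToRing S I (s ⊗ₜ x) = algebraMap R S (x : R) * s := by
  simp [tensorIdealToRing, Algebra.smul_def]

lemma tensorIdealToRing_injective : Function.Injective (tensorIdealToRing S I) := by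
  have h1 : Function.Injective
      ((TensorProduct.AlgebraTensorModule.rid R S S : (S ⊗[R] R) ≃ₗ[S] S)) :=
    (TensorProduct.AlgebraTensorModule.rid R S S).injective
  have h2 : Function.Injective (I.subtype.baseChange S) := by
    have : (LinearMap.restrictScalars R (I.subtype.baseChange S)) =
        LinearMap.lTensor S I.subtype := by
      apply TensorProduct.ext'
      intro s x
      rfl
    have hinj := Module.Flat.lTensor_preserves_injective_linearMap (M := S)
      I.subtype (Submodule.injective_subtype I)
    intro a b hab
    have : LinearMap.lTensor S I.subtype a = LinearMap.lTensor S I.subtype b := by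
      rw [← this]; exact hab
    exact hinj this
  exact h1.comp h2

lemma tensorIdealToRing_range :
    LinearMap.range (tensorIdealToRing S I) = (I.map (algebraMap R S)) := by
  apply le_antisymm
  · rintro _ ⟨x, rfl⟩
    induction x using TensorProduct.induction_on with
    | zero => simp
    | tmul s a =>
      rw [tensorIdealToRing_tmul]
      exact Ideal.mul_mem_right _ _ (Ideal.mem_map_of_mem _ a.2)
    | add x y hx hy => rw [map_add]; exact add_mem hx hy
  · rw [Ideal.map, Ideal.span_le]
    rintro _ ⟨a, ha, rfl⟩
    exact ⟨(1 : S) ⊗ₜ ⟨a, ha⟩, by rw [tensorIdealToRing_tmul]; simp⟩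

/-- If `I` extends to a principal ideal generated by a regular element `g`, then
`S ⊗ I ≃ S`. -/
noncomputable def tensorIdealEquiv (g : S)
    (hmap : I.map (algebraMap R S) = Ideal.span {g})
    (hreg : ∀ x y : S, x * g = y * g → x = y) :
    (S ⊗[R] ↥I) ≃ₗ[S] S := by
  have hginj : Function.Injective (LinearMap.toSpanSingleton S S g) := by
    intro x y hxy
    exact hreg x y (by simpa [LinearMap.toSpanSingleton_apply, smul_eq_mul, mul_comm] using hxy)
  have e1 := LinearEquiv.ofInjective (tensorIdealToRing S I) (tensorIdealToRing_injective S)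
  have heq : LinearMap.range (tensorIdealToRing S I) =
      LinearMap.range (LinearMap.toSpanSingleton S S g) := by
    rw [tensorIdealToRing_range, hmap, ← LinearMap.span_singleton_eq_range]
  exact e1.trans ((LinearEquiv.ofEq _ _ heq).trans
    (LinearEquiv.ofInjective (LinearMap.toSpanSingleton S S g) hginj).symm)

/-- Main module-theoretic step: `S ⊗ (R × I) ≃ S × S`. -/
noncomputable def tensorProdEquiv (g : S)
    (hmap : I.map (algebraMap R S) = Ideal.span {g})
    (hreg : ∀ x y : S, x * g = y * g → x = y) :
    (S ⊗[R] (R × ↥I)) ≃ₗ[S] S × S :=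
  (prodBaseChange S R ↥I).trans
    (LinearEquiv.prodCongr (TensorProduct.AlgebraTensorModule.rid R S S)
      (tensorIdealEquiv S g hmap hreg))

end ModuleHelper




section LocHelper

variable {R : Type*} [CommRing R] [IsDomain R]

/-- Key localization fact: if `a ∈ I`, `b ∈ K` with `I * b ⊆ R` and `a * b = r`,
then in any `R`-algebra `T` where `r` is invertible, `I` extends to `(a)`. -/
lemma map_eq_span_of_unit
    {K : Type*} [CommRing K] [Algebra R K]
    (hinj : Function.Injective (algebraMap R K))
    {I : Ideal R} {a r : R} (ha : a ∈ I) {b : K}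
    (hb : ∀ x ∈ I, ∃ c : R, algebraMap R K c = algebraMap R K x * b)
    (hr : algebraMap R K r = algebraMap R K a * b)
    (T : Type*) [CommRing T] [Algebra R T] (hu : IsUnit (algebraMap R T r)) :
    I.map (algebraMap R T) = Ideal.span {algebraMap R T a} := by
  apply le_antisymm
  · rw [Ideal.map, Ideal.span_le]
    rintro _ ⟨x, hx, rfl⟩
    obtain ⟨c, hc⟩ := hb x hx
    have key : a * c = x * r := by
      apply hinj
      rw [map_mul, map_mul, hc, hr]; ring
    rw [SetLike.mem_coe, Ideal.mem_span_singleton]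
    obtain ⟨u, hu'⟩ := hu
    refine ⟨algebraMap R T c * (↑u⁻¹ : Tˣ), ?_⟩
    have : algebraMap R T (x * r) = algebraMap R T (a * c) := by rw [key]
    rw [map_mul, map_mul] at this
    calc algebraMap R T x = algebraMap R T x * (algebraMap R T r * ↑u⁻¹) := by
          rw [← hu', Units.mul_inv, mul_one]
      _ = (algebraMap R T a * algebraMap R T c) * ↑u⁻¹ := by rw [← mul_assoc, this]
      _ = algebraMap R T a * (algebraMap R T c * ↑u⁻¹) := by ring
  · rw [Ideal.span_le, Set.singleton_subset_iff]
    exact Ideal.mem_map_of_mem _ ha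

/-- Regularity of the image of a nonzero element in a localization away from a nonzero
element, covering also the degenerate (zero) case. -/
lemma regular_in_away {a f : R} (hfa : f ≠ 0 → a ≠ 0)
    (x y : Localization.Away f)
    (h : x * algebraMap R (Localization.Away f) a = y * algebraMap R (Localization.Away f) a) :
    x = y := by
  by_cases hf : f = 0
  · have : Subsingleton (Localization.Away f) :=
      IsLocalization.subsingleton (M := Submonoid.powers f) ⟨1, by simp [hf]⟩
    exact Subsingleton.elim x y
  · have ha : a ≠ 0 := hfa hf
    have hle : Submonoid.powers f ≤ nonZeroDivisors R :=
      powers_le_nonZeroDivisors_of_noZeroDivisors hf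
    have : IsDomain (Localization.Away f) :=
      IsLocalization.isDomain_localization hle
    have hainj : Function.Injective (algebraMap R (Localization.Away f)) :=
      IsLocalization.injective _ hle
    have ha' : algebraMap R (Localization.Away f) a ≠ 0 := by
      intro h0
      exact ha (hainj (by rw [h0, map_zero]))
    exact mul_right_cancel₀ ha' h

/-- The extension of a prime avoiding `f` to `Localization.Away f` is proper. -/
lemma map_ne_top_of_not_mem {f : R} {m : Ideal R} (hm : m.IsPrime) (hf : f ∉ m) :
    m.map (algebraMap R (Localization.Away f)) ≠ ⊤ := by
  intro htop
  have h1 : (1 : Localization.Away f) ∈ m.map (algebraMap R (Localization.Away f)) := by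
    rw [htop]; trivial
  rw [IsLocalization.mem_map_algebraMap_iff (Submonoid.powers f)] at h1
  obtain ⟨⟨x, s⟩, hxs⟩ := h1
  rw [one_mul] at hxs
  obtain ⟨j, hj⟩ := s.2
  have := IsLocalization.exists_of_eq (M := Submonoid.powers f)
    (S := Localization.Away f) hxs
  obtain ⟨⟨c, ⟨i, hi⟩⟩, hc⟩ := this
  have hcs : c * (s : R) = c * (x : R) := hc
  have hmem : (f ^ i * f ^ j : R) ∈ m := by
    have heq : (f ^ i * f ^ j : R) = c * (x : R) := by
      rw [show f ^ i = c from hi, show f ^ j = (s : R) from hj, hcs]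
    rw [heq]
    exact m.mul_mem_left _ x.2
  have : f ∈ m := by
    rcases hm.mem_or_mem hmem with h | h
    · exact hm.mem_of_pow_mem _ h
    · exact hm.mem_of_pow_mem _ h
  exact hf this

end LocHelper


open scoped nonZeroDivisors

section Data

variable {R : Type u_1} [CommRing R] [IsDomain R] [IsDedekindDomain R]

/-- From invertibility of a nonzero ideal in a Dedekind domain, extract a finite
"partition of unity" datum trivializing `I` locally. -/
lemma exists_trivializing_data (I : Ideal R) (hI : I ≠ 0) :
    ∃ (n : ℕ) (α : Fin n → R) (r : Fin n → R) (b : Fin n → FractionRing R),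
      (∀ k, α k ∈ I) ∧
      (∀ k, ∀ x ∈ I, ∃ c : R, algebraMap R (FractionRing R) c
          = algebraMap R (FractionRing R) x * b k) ∧
      (∀ k, algebraMap R (FractionRing R) (r k)
          = algebraMap R (FractionRing R) (α k) * b k) ∧
      (∑ k, r k) = 1 ∧
      (∀ k, r k ≠ 0 → α k ≠ 0) := by
  classical
  set K := FractionRing R
  have hinj : Function.Injective (algebraMap R K) := IsFractionRing.injective R K
  set J : FractionalIdeal R⁰ K := (I : FractionalIdeal R⁰ K) with hJ
  have hJ0 : J ≠ 0 := by
    simpa [hJ] using (FractionalIdeal.coeIdeal_ne_zero (K := K)).mpr hI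
  have hunit : J * J⁻¹ = 1 := mul_inv_cancel₀ hJ0
  have hone : (1 : K) ∈ ((J * J⁻¹ : FractionalIdeal R⁰ K) : Submodule R K) := by
    rw [hunit]
    exact FractionalIdeal.one_mem_one _
  rw [FractionalIdeal.coe_mul] at hone
  -- decompose 1 as a finite sum of products
  have hrep : ∃ (n : ℕ) (a : Fin n → K) (b : Fin n → K),
      (∀ k, a k ∈ (J : Submodule R K)) ∧
      (∀ k, b k ∈ ((J⁻¹ : FractionalIdeal R⁰ K) : Submodule R K)) ∧
      (1 : K) = ∑ k, a k * b k := by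
    refine Submodule.mul_induction_on hone ?_ ?_
    · intro m hm p hp
      exact ⟨1, fun _ => m, fun _ => p, fun _ => hm, fun _ => hp, by simp⟩
    · rintro x y ⟨n₁, a₁, b₁, ha₁, hb₁, hx⟩ ⟨n₂, a₂, b₂, ha₂, hb₂, hy⟩
      refine ⟨n₁ + n₂, Fin.append a₁ a₂, Fin.append b₁ b₂, ?_, ?_, ?_⟩
      · refine Fin.addCases ?_ ?_ <;> intro i
        · rw [Fin.append_left]; exact ha₁ i
        · rw [Fin.append_right]; exact ha₂ i
      · refine Fin.addCases ?_ ?_ <;> intro i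
        · rw [Fin.append_left]; exact hb₁ i
        · rw [Fin.append_right]; exact hb₂ i
      · rw [Fin.sum_univ_add]
        simp only [Fin.append_left, Fin.append_right]
        rw [← hx, ← hy]
  obtain ⟨n, a, b, haJ, hbJ, hsum⟩ := hrep
  -- each a k is the image of some α k ∈ I
  have hα : ∀ k, ∃ α : R, α ∈ I ∧ algebraMap R K α = a k := by
    intro k
    have := haJ k
    rw [hJ] at this
    exact (FractionalIdeal.mem_coeIdeal _).mp this
  choose α hαI hαa using hα
  -- each a k * b k is the image of some r k ∈ R
  have hr : ∀ k, ∃ r : R, algebraMap R K r = a k * b k := by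
    intro k
    have : a k * b k ∈ ((J * J⁻¹ : FractionalIdeal R⁰ K) : Submodule R K) := by
      rw [FractionalIdeal.coe_mul]
      exact Submodule.mul_mem_mul (haJ k) (hbJ k)
    rw [hunit] at this
    exact (FractionalIdeal.mem_one_iff _).mp this
  choose r hrk using hr
  refine ⟨n, α, r, b, hαI, ?_, ?_, ?_, ?_⟩
  · intro k x hx
    have hxb : algebraMap R K x * b k ∈ ((J * J⁻¹ : FractionalIdeal R⁰ K) : Submodule R K) := by
      rw [FractionalIdeal.coe_mul]
      refine Submodule.mul_mem_mul ?_ (hbJ k)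
      rw [hJ]
      exact FractionalIdeal.mem_coeIdeal_of_mem _ hx
    rw [hunit] at hxb
    exact (FractionalIdeal.mem_one_iff _).mp hxb
  · intro k
    rw [hrk k, hαa k]
  · apply hinj
    rw [map_sum, map_one]
    simp only [hrk]
    exact hsum.symm
  · intro k hrk0 hαk0
    apply hrk0
    apply hinj
    rw [hrk k, ← hαa k, hαk0]
    simp

end Data

open DirectSum



lemma algebraMap_finitePresentation_iff {R A : Type*} [CommRing R] [CommRing A] [Algebra R A] :
    RingHom.FinitePresentation (algebraMap R A) ↔ Algebra.FinitePresentation R A := by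
  have h : (algebraMap R A).toAlgebra = ‹Algebra R A› := Algebra.algebra_ext _ _ fun r => rfl
  unfold RingHom.FinitePresentation
  rw [h]

section PiLoc

variable {R : Type u} [CommRing R] {ι : Type} (f : ι → R)

lemma ringEquiv_finitePresentation {A B : Type*} [CommRing A] [CommRing B] (e : A ≃+* B) :
    RingHom.FinitePresentation (e : A →+* B) := by
  apply RingHom.FinitePresentation.of_surjective _ e.surjective
  rw [RingHom.ker_coe_equiv]
  exact Submodule.fg_bot

lemma pi_single_isLocalization [Fintype ι] [DecidableEq ι] (p : ι) :
    letI : Algebra (Π q, Localization.Away (f q)) (Localization.Away (f p)) :=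
      (Pi.evalRingHom (fun q => Localization.Away (f q)) p).toAlgebra
    IsLocalization.Away (Pi.single p 1 : Π q, Localization.Away (f q))
      (Localization.Away (f p)) := by
  letI : Algebra (Π q, Localization.Away (f q)) (Localization.Away (f p)) :=
    (Pi.evalRingHom (fun q => Localization.Away (f q)) p).toAlgebra
  apply IsLocalization.away_of_isIdempotentElem_of_mul
  · show (Pi.single p 1 : Π q, Localization.Away (f q)) * Pi.single p 1 = Pi.single p 1
    funext j
    by_cases hj : j = p
    · subst hj; simp
    · simp [Pi.single_apply, hj]
  · intro x y
    constructor
    · intro h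
      funext j
      have : ∀ z : Π q, Localization.Away (f q),
          ((Pi.single p 1 : Π q, Localization.Away (f q)) * z) j
            = if j = p then z j else 0 := by
        intro z
        by_cases hj : j = p
        · subst hj; simp
        · simp [Pi.single_apply, hj]
      rw [this, this]
      by_cases hj : j = p
      · subst hj
        simp only [if_pos rfl]
        exact h
      · simp [hj]
    · intro h
      have := congrFun h p
      show x p = y p
      simpa [Pi.single_apply] using this
  · intro z
    refine ⟨Pi.single p z, ?_⟩
    rw [RingHom.algebraMap_toAlgebra]
    exact Pi.single_eq_same (M := fun q => Localization.Away (f q)) p z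

lemma pi_loc_finitePresentation [Fintype ι] :
    Algebra.FinitePresentation R (Π p, Localization.Away (f p)) := by
  classical
  rw [← algebraMap_finitePresentation_iff]
  set S := Π p, Localization.Away (f p) with hS
  apply RingHom.finitePresentation_ofLocalizationSpanTarget (algebraMap R S)
      (Set.range fun p => (Pi.single p 1 : S))
  · rw [Ideal.eq_top_iff_one]
    have h1 : ∑ p, (Pi.single p 1 : S) = 1 := by
      have h2 := Finset.univ_sum_single (1 : S)
      exact h2
    rw [← h1]
    exact Ideal.sum_mem _ fun p _ => Ideal.subset_span ⟨p, rfl⟩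
  · rintro ⟨_, p, rfl⟩
    letI : Algebra S (Localization.Away (f p)) :=
      (Pi.evalRingHom (fun q => Localization.Away (f q)) p).toAlgebra
    haveI := pi_single_isLocalization f p
    let e : Localization.Away (Pi.single p 1 : S) ≃ₐ[S] Localization.Away (f p) :=
      IsLocalization.algEquiv (Submonoid.powers (Pi.single p 1 : S)) _ _
    have key : (algebraMap S (Localization.Away (Pi.single p 1 : S))).comp (algebraMap R S)
        = (e.symm : Localization.Away (f p) →+* Localization.Away (Pi.single p 1 : S)).comp
            (algebraMap R (Localization.Away (f p))) := by
      ext x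
      exact (e.symm.commutes (algebraMap R S x)).symm
    rw [key]
    apply RingHom.FinitePresentation.comp
    · exact ringEquiv_finitePresentation e.symm.toRingEquiv
    · exact algebraMap_finitePresentation_iff.mpr
        (IsLocalization.Away.finitePresentation (f p))

lemma pi_loc_formallyEtale [Finite ι] :
    Algebra.FormallyEtale R (Π p, Localization.Away (f p)) := by
  have h : ∀ p, Algebra.FormallyEtale R (Localization.Away (f p)) := fun p =>
    Algebra.FormallyEtale.of_isLocalization (Submonoid.powers (f p))
  rw [Algebra.FormallyEtale.iff_formallyUnramified_and_formallySmooth]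
  constructor
  · rw [Algebra.FormallyUnramified.pi_iff]
    intro p
    exact (Algebra.FormallyEtale.iff_formallyUnramified_and_formallySmooth.mp (h p)).1
  · rw [Algebra.FormallySmooth.pi_iff]
    intro p
    exact (Algebra.FormallyEtale.iff_formallyUnramified_and_formallySmooth.mp (h p)).2

set_option maxHeartbeats 1000000 in
lemma pi_loc_faithfullyFlat [IsDomain R] [Fintype ι] (hone : ∑ p, f p = 1) :
    Module.FaithfullyFlat R (Π p, Localization.Away (f p)) := by
  classical
  rw [Module.FaithfullyFlat.iff_flat_and_proper_ideal]
  constructor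
  · haveI : Module.Flat R (⨁ p, Localization.Away (f p)) := inferInstance
    exact Module.Flat.of_linearEquiv
      (DirectSum.linearEquivFunOnFintype R ι (fun p => Localization.Away (f p))).symm
  · intro J hJ htop
    obtain ⟨m, hm, hJm⟩ := J.exists_le_maximal hJ
    have hmtop : m • (⊤ : Submodule R (Π p, Localization.Away (f p))) = ⊤ := by
      have hle := Submodule.smul_mono_left
        (N := (⊤ : Submodule R (Π p, Localization.Away (f p)))) hJm
      rw [htop] at hle
      exact top_le_iff.mp hle
    have hp : ∃ p, f p ∉ m := by
      by_contra hall
      push_neg at hall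
      exact hm.ne_top (Ideal.eq_top_iff_one m |>.mpr (hone ▸ Ideal.sum_mem m fun p _ => hall p))
    obtain ⟨p, hfp⟩ := hp
    set π : (Π q, Localization.Away (f q)) →ₗ[R] Localization.Away (f p) :=
      LinearMap.proj p
    have hsurj : Function.Surjective π := fun x => ⟨Pi.single p x, by simp [π]⟩
    have h2 : m • (⊤ : Submodule R (Localization.Away (f p))) = ⊤ := by
      have := congrArg (Submodule.map π) hmtop
      rw [Submodule.map_smul''] at this
      rwa [Submodule.map_top, LinearMap.range_eq_top.mpr hsurj] at this
    rw [Ideal.smul_top_eq_map, Submodule.restrictScalars_eq_top_iff] at h2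
    exact map_ne_top_of_not_mem hm.isPrime hfp h2

end PiLoc


section BuildG

variable {R : Type u} [CommRing R] [IsDomain R] {ι : Type} [Fintype ι]

/-- Build the generator data for the extended ideal over the product of localizations. -/
lemma build_generator (f : ι → R) (I : Ideal R)
    (α : ι → R) (hα : ∀ p, α p ∈ I) (b : ι → FractionRing R)
    (hb : ∀ p, ∀ x ∈ I, ∃ c : R, algebraMap R (FractionRing R) c
        = algebraMap R (FractionRing R) x * b p)
    (rr : ι → R)
    (hr : ∀ p, algebraMap R (FractionRing R) (rr p)
        = algebraMap R (FractionRing R) (α p) * b p)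
    (hu : ∀ p, IsUnit (algebraMap R (Localization.Away (f p)) (rr p)))
    (hfa : ∀ p, f p ≠ 0 → α p ≠ 0) :
    (I.map (algebraMap R (Π p, Localization.Away (f p)))
        = Ideal.span {(fun p => algebraMap R (Localization.Away (f p)) (α p) :
            Π p, Localization.Away (f p))}) ∧
      (∀ x y : Π p, Localization.Away (f p),
        x * (fun p => algebraMap R (Localization.Away (f p)) (α p)) =
          y * (fun p => algebraMap R (Localization.Away (f p)) (α p)) → x = y) := by
  classical
  set S := Π p, Localization.Away (f p) with hSdef
  set g : S := fun p => algebraMap R (Localization.Away (f p)) (α p) with hg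
  have hinj : Function.Injective (algebraMap R (FractionRing R)) :=
    IsFractionRing.injective R (FractionRing R)
  have hfac : ∀ p, I.map (algebraMap R (Localization.Away (f p)))
      = Ideal.span {algebraMap R (Localization.Away (f p)) (α p)} := fun p =>
    map_eq_span_of_unit hinj (hα p) (hb p) (hr p) (Localization.Away (f p)) (hu p)
  constructor
  · apply le_antisymm
    · rw [Ideal.map_le_iff_le_comap]
      intro x hx
      have hcomp : ∀ p, ∃ c : Localization.Away (f p),
          c * algebraMap R (Localization.Away (f p)) (α p)
            = algebraMap R (Localization.Away (f p)) x := by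
        intro p
        have hx' : algebraMap R (Localization.Away (f p)) x
            ∈ I.map (algebraMap R (Localization.Away (f p))) := Ideal.mem_map_of_mem _ hx
        rw [hfac p, Ideal.mem_span_singleton'] at hx'
        exact hx'
      choose c hc using hcomp
      show algebraMap R S x ∈ Ideal.span {g}
      rw [Ideal.mem_span_singleton']
      refine ⟨c, ?_⟩
      funext p
      exact hc p
    · rw [Ideal.span_le, Set.singleton_subset_iff]
      have hrepr : g = ∑ p, (Pi.single p 1 : S) * algebraMap R S (α p) := by
        funext q
        rw [Finset.sum_apply]
        have : ∀ p, ((Pi.single p 1 : S) * algebraMap R S (α p)) q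
            = if q = p then algebraMap R (Localization.Away (f q)) (α p) else 0 := by
          intro p
          rw [Pi.mul_apply]
          by_cases hq : q = p
          · subst hq
            rw [Pi.single_eq_same, one_mul, if_pos rfl]
            rfl
          · rw [Pi.single_eq_of_ne hq, zero_mul, if_neg hq]
        simp only [this, Finset.sum_ite_eq, Finset.mem_univ, if_pos]
        rfl
      rw [hrepr]
      exact Ideal.sum_mem _ fun p _ =>
        Ideal.mul_mem_left _ _ (Ideal.mem_map_of_mem _ (hα p))
  · intro x y hxy
    funext p
    have hp := congrFun hxy p
    have hp' : x p * algebraMap R (Localization.Away (f p)) (α p)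
        = y p * algebraMap R (Localization.Away (f p)) (α p) := hp
    exact regular_in_away (hfa p) _ _ hp'

end BuildG


open scoped TensorProduct

/-- Let `R` be a Dedekind domain and `I`, `I'` nonzero ideals of `R`.
Then there is a faithfully flat étale `R`-algebra `S` such that `S ⊗[R] (R ⊕ I)` and
`S ⊗[R] (R ⊕ I')` are isomorphic as `S`-modules. -/
theorem exists_etale_cover_iso
    (R : Type u) [CommRing R] [IsDomain R] [IsDedekindDomain R]
    (I I' : Ideal R) (hI : I ≠ 0) (hI' : I' ≠ 0) :
    ∃ (S : Type u) (_ : CommRing S) (_ : Algebra R S),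
      Algebra.Etale R S ∧ Module.FaithfullyFlat R S ∧
        Nonempty ((S ⊗[R] (R × ↥I)) ≃ₗ[S] (S ⊗[R] (R × ↥I'))) := by
  classical
  obtain ⟨n, α, rr, b, hαI, hb, hrab, hsum, hne⟩ := exists_trivializing_data I hI
  obtain ⟨n', α', rr', b', hαI', hb', hrab', hsum', hne'⟩ := exists_trivializing_data I' hI'
  set ι : Type := Fin n × Fin n' with hι
  set f : ι → R := fun p => rr p.1 * rr' p.2 with hf
  set S := Π p : ι, Localization.Away (f p) with hSdef
  have hsum_f : ∑ p : ι, f p = 1 := by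
    rw [show (Finset.univ : Finset ι) = Finset.univ ×ˢ Finset.univ from
      Finset.univ_product_univ.symm, Finset.sum_product, ← Finset.sum_mul_sum, hsum, hsum',
      one_mul]
  -- units of rr p.1 and rr' p.2 in each factor
  have huf : ∀ p : ι, IsUnit (algebraMap R (Localization.Away (f p)) (f p)) := by
    intro p
    exact IsLocalization.map_units (M := Submonoid.powers (f p)) _
      ⟨f p, Submonoid.mem_powers _⟩
  have hu1 : ∀ p : ι, IsUnit (algebraMap R (Localization.Away (f p)) (rr p.1)) := by
    intro p
    have := huf p
    rw [hf] at this
    simp only [map_mul] at this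
    exact isUnit_of_mul_isUnit_left this
  have hu2 : ∀ p : ι, IsUnit (algebraMap R (Localization.Away (f p)) (rr' p.2)) := by
    intro p
    have := huf p
    rw [hf] at this
    simp only [map_mul] at this
    exact isUnit_of_mul_isUnit_right this
  have hfa1 : ∀ p : ι, f p ≠ 0 → α p.1 ≠ 0 := by
    intro p hfp
    apply hne
    intro h0
    apply hfp
    rw [hf]
    simp [h0]
  have hfa2 : ∀ p : ι, f p ≠ 0 → α' p.2 ≠ 0 := by
    intro p hfp
    apply hne'
    intro h0
    apply hfp
    rw [hf]
    simp [h0]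
  obtain ⟨hmap1, hreg1⟩ := build_generator f I (fun p => α p.1) (fun p => hαI p.1)
    (fun p => b p.1) (fun p => hb p.1) (fun p => rr p.1) (fun p => hrab p.1) hu1 hfa1
  obtain ⟨hmap2, hreg2⟩ := build_generator f I' (fun p => α' p.2) (fun p => hαI' p.2)
    (fun p => b' p.2) (fun p => hb' p.2) (fun p => rr' p.2) (fun p => hrab' p.2) hu2 hfa2
  haveI hff : Module.FaithfullyFlat R S := pi_loc_faithfullyFlat f hsum_f
  haveI : Module.Flat R S := hff.toFlat
  refine ⟨S, inferInstance, inferInstance, ?_, hff, ?_⟩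
  · exact ⟨pi_loc_formallyEtale f, pi_loc_finitePresentation f⟩
  · exact ⟨(tensorProdEquiv S _ hmap1 hreg1).trans (tensorProdEquiv S _ hmap2 hreg2).symm⟩
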